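/- Let σ > 0 and let Z be a real Gaussian random variable with mean 0 and variance σ². Let h : ℝ → ℝ be strictly increasing and continuous and satisfy condition [A₋] with parameter b₋ > 0. Then the left tail of the distribution of Y = h(Z) is regularly varying at infinity with index −β₋, where β₋ = 1/(2 b₋ σ²): that is, for every λ > 0, P(h(Z) ≤ −λy) / P(h(Z) ≤ −y) → λ^{−β₋} as y → ∞. -/

import Mathlib

open MeasureTheory Filter Real Set

lemma integrable_gexp {v : ℝ} (hv : 0 < v) : Integrable (fun x : ℝ => rexp (-x^2/(2*v))) := by
  have h : ∀ x : ℝ, rexp (-x^2/(2*v)) = rexp (-(2*v)⁻¹ * x^2) := by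
    intro x; congr 1; field_simp
  simpa [h] using integrable_exp_neg_mul_sq (by positivity : (0:ℝ) < (2*v)⁻¹)

lemma hasDerivAt_gexp {v : ℝ} (hv : 0 < v) (x : ℝ) :
    HasDerivAt (fun x : ℝ => rexp (-x^2/(2*v))) ((-x/v) * rexp (-x^2/(2*v))) x := by
  have hi : HasDerivAt (fun x : ℝ => -x^2/(2*v)) (-x/v) x := by
    have := ((hasDerivAt_pow 2 x).neg).div_const (2*v)
    refine this.congr_deriv ?_
    field_simp; ring
  simpa [mul_comm] using hi.exp

lemma tendsto_aux_zero {v : ℝ} (hv : 0 < v) (c : ℝ) :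
    Tendsto (fun x : ℝ => (c/x) * rexp (-x^2/(2*v))) atBot (nhds 0) := by
  apply squeeze_zero_norm' (a := fun x : ℝ => |c|/(-x))
  · filter_upwards [eventually_lt_atBot (0:ℝ)] with x hx
    have h1 : rexp (-x^2/(2*v)) ≤ 1 := by
      rw [exp_le_one_iff]
      apply div_nonpos_of_nonpos_of_nonneg (by nlinarith) (by positivity)
    have h2 : (0:ℝ) < rexp (-x^2/(2*v)) := exp_pos _
    rw [norm_mul, norm_div]
    calc ‖c‖/‖x‖ * ‖rexp (-x^2/(2*v))‖ ≤ ‖c‖/‖x‖ * 1 := by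
          apply mul_le_mul_of_nonneg_left _ (by positivity)
          rwa [Real.norm_eq_abs, abs_of_pos h2]
      _ = |c|/(-x) := by
          rw [mul_one, Real.norm_eq_abs, Real.norm_eq_abs, abs_of_neg hx]
  · have : Tendsto (fun x : ℝ => -x) atBot atTop := tendsto_neg_atBot_atTop
    exact Tendsto.div_atTop tendsto_const_nhds this

lemma mill_upper {v t : ℝ} (hv : 0 < v) (ht : t < 0) :
    ∫ x in Iic t, rexp (-x^2/(2*v)) ≤ (v / (-t)) * rexp (-t^2/(2*v)) := by
  set N : ℝ → ℝ := fun x => (-v * x⁻¹) * rexp (-x^2/(2*v)) with hN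
  set N' : ℝ → ℝ := fun x => (v/x^2 + 1) * rexp (-x^2/(2*v)) with hN'
  have hderiv : ∀ x ∈ Iic t, HasDerivAt N (N' x) x := by
    intro x hx
    simp only [mem_Iic] at hx
    have hx0 : x ≠ 0 := ne_of_lt (lt_of_le_of_lt hx ht)
    have hx2 : (0:ℝ) < x^2 := by nlinarith
    have h1 : HasDerivAt (fun x : ℝ => -v * x⁻¹) (-v * -(x^2)⁻¹) x :=
      (hasDerivAt_inv hx0).const_mul (-v)
    have := h1.mul (hasDerivAt_gexp hv x)
    refine this.congr_deriv ?_
    simp only [hN']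
    field_simp
  have hint : IntegrableOn N' (Iic t) := by
    have ht2 : (0:ℝ) < t^2 := by nlinarith
    apply Integrable.mono ((integrable_gexp hv).const_mul (v/t^2 + 1)).integrableOn
    · apply ContinuousOn.aestronglyMeasurable _ measurableSet_Iic
      apply ContinuousOn.mul
      · apply ContinuousOn.add _ continuousOn_const
        apply ContinuousOn.div continuousOn_const (by fun_prop)
        intro x hx
        simp only [mem_Iic] at hx
        nlinarith
      · fun_prop
    · filter_upwards [ae_restrict_mem measurableSet_Iic] with x hx
      simp only [mem_Iic] at hx
      have hx2 : t^2 ≤ x^2 := by nlinarith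
      have hx2' : (0:ℝ) < x^2 := by nlinarith
      have he : (0:ℝ) < rexp (-x^2/(2*v)) := exp_pos _
      simp only [hN']
      rw [Real.norm_eq_abs, Real.norm_eq_abs]
      rw [abs_of_pos (by positivity), abs_of_pos (by positivity)]
      apply mul_le_mul_of_nonneg_right _ he.le
      have : v/x^2 ≤ v/t^2 := by
        apply div_le_div_of_nonneg_left hv.le ht2 hx2
      linarith
  have hlim : Tendsto N atBot (nhds 0) := tendsto_aux_zero hv (-v)
  have key : ∫ x in Iic t, N' x = N t - 0 :=
    integral_Iic_of_hasDerivAt_of_tendsto' hderiv hint hlim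
  have hle : ∫ x in Iic t, rexp (-x^2/(2*v)) ≤ ∫ x in Iic t, N' x := by
    apply setIntegral_mono_on (integrable_gexp hv).integrableOn hint measurableSet_Iic
    intro x hx
    simp only [mem_Iic] at hx
    have hx2 : (0:ℝ) < x^2 := by nlinarith
    have : (0:ℝ) ≤ v/x^2 := by positivity
    have he : (0:ℝ) < rexp (-x^2/(2*v)) := exp_pos _
    simp only [hN']
    nlinarith
  rw [key, sub_zero] at hle
  calc ∫ x in Iic t, rexp (-x^2/(2*v)) ≤ N t := hle
    _ = (v / (-t)) * rexp (-t^2/(2*v)) := by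
        have : -v * t⁻¹ = v / (-t) := by rw [div_neg, div_eq_mul_inv]; ring
        simp only [hN, this]

lemma mill_lower {v t : ℝ} (hv : 0 < v) (ht : t < 0) :
    (v * (-t) / (t^2 + v)) * rexp (-t^2/(2*v)) ≤ ∫ x in Iic t, rexp (-x^2/(2*v)) := by
  set M : ℝ → ℝ := fun x => (-v * x / (x^2 + v)) * rexp (-x^2/(2*v)) with hM
  set M' : ℝ → ℝ := fun x => (1 - 2*v^2/(x^2+v)^2) * rexp (-x^2/(2*v)) with hM'
  have hden : ∀ x : ℝ, x^2 + v ≠ 0 := fun x => by positivity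
  have hderiv : ∀ x ∈ Iic t, HasDerivAt M (M' x) x := by
    intro x _
    have h1 : HasDerivAt (fun x : ℝ => -v * x / (x^2 + v))
        ((-v * (x^2 + v) - (-v * x) * (2*x)) / (x^2+v)^2) x := by
      have hnum : HasDerivAt (fun x : ℝ => -v * x) (-v) x := by
        simpa using (hasDerivAt_id x).const_mul (-v)
      have hden' : HasDerivAt (fun x : ℝ => x^2 + v) (2*x) x := by
        simpa using (hasDerivAt_pow 2 x).add_const v
      exact hnum.div hden' (hden x)
    have := h1.mul (hasDerivAt_gexp hv x)
    refine this.congr_deriv ?_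
    simp only [hM']
    field_simp
    ring
  have hint : IntegrableOn M' (Iic t) := by
    apply Integrable.mono (integrable_gexp hv).integrableOn
    · apply ContinuousOn.aestronglyMeasurable _ measurableSet_Iic
      apply ContinuousOn.mul _ (by fun_prop)
      apply ContinuousOn.sub continuousOn_const
      apply ContinuousOn.div continuousOn_const (by fun_prop)
      intro x _
      positivity
    · filter_upwards [ae_restrict_mem measurableSet_Iic] with x _
      have he : (0:ℝ) < rexp (-x^2/(2*v)) := exp_pos _
      simp only [hM']
      rw [Real.norm_eq_abs, Real.norm_eq_abs, abs_of_pos he, abs_mul, abs_of_pos he]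
      have habs : |1 - 2*v^2/(x^2+v)^2| ≤ 1 := by
        rw [abs_le]
        have h1 : (0:ℝ) < (x^2+v)^2 := by positivity
        have h2 : 2*v^2/(x^2+v)^2 ≤ 2 := by
          rw [div_le_iff₀ h1]; nlinarith
        have h3 : (0:ℝ) ≤ 2*v^2/(x^2+v)^2 := by positivity
        constructor <;> linarith
      calc |1 - 2*v^2/(x^2+v)^2| * rexp (-x^2/(2*v)) ≤ 1 * rexp (-x^2/(2*v)) :=
            mul_le_mul_of_nonneg_right habs he.le
        _ = rexp (-x^2/(2*v)) := one_mul _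
  have hlim : Tendsto M atBot (nhds 0) := by
    apply squeeze_zero_norm' (a := fun x : ℝ => v/(-x))
    · filter_upwards [eventually_lt_atBot (0:ℝ)] with x hx
      have he : (0:ℝ) < rexp (-x^2/(2*v)) := exp_pos _
      have he1 : rexp (-x^2/(2*v)) ≤ 1 := by
        rw [exp_le_one_iff]
        apply div_nonpos_of_nonpos_of_nonneg (by nlinarith) (by positivity)
      have hx2 : (0:ℝ) < x^2 := by nlinarith
      have hnn : (0:ℝ) ≤ -v*x/(x^2+v) := by
        apply div_nonneg (by nlinarith) (by positivity)
      rw [Real.norm_eq_abs, abs_mul, abs_of_pos he, abs_of_nonneg hnn]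
      calc -v*x/(x^2+v) * rexp (-x^2/(2*v)) ≤ -v*x/(x^2+v) * 1 :=
            mul_le_mul_of_nonneg_left he1 hnn
        _ = -v*x/(x^2+v) := mul_one _
        _ ≤ -v*x/x^2 := by
            apply div_le_div_of_nonneg_left (by nlinarith) hx2 (by nlinarith)
        _ = v/(-x) := by
            have hx0 : x ≠ 0 := hx.ne
            rw [div_neg]; field_simp
    · exact Tendsto.div_atTop tendsto_const_nhds tendsto_neg_atBot_atTop
  have key : ∫ x in Iic t, M' x = M t - 0 :=
    integral_Iic_of_hasDerivAt_of_tendsto' hderiv hint hlim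
  have hle : ∫ x in Iic t, M' x ≤ ∫ x in Iic t, rexp (-x^2/(2*v)) := by
    apply setIntegral_mono_on hint (integrable_gexp hv).integrableOn measurableSet_Iic
    intro x _
    have he : (0:ℝ) < rexp (-x^2/(2*v)) := exp_pos _
    have h3 : (0:ℝ) ≤ 2*v^2/(x^2+v)^2 := by positivity
    simp only [hM']
    nlinarith
  rw [key, sub_zero] at hle
  calc (v * (-t) / (t^2 + v)) * rexp (-t^2/(2*v)) = M t := by
        simp only [hM]; ring_nf
    _ ≤ _ := hle

lemma integral_gexp_pos {v t : ℝ} (hv : 0 < v) (ht : t < 0) :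
    0 < ∫ x in Iic t, rexp (-x^2/(2*v)) := by
  have := mill_lower hv ht
  have h1 : 0 < (v * (-t) / (t^2 + v)) * rexp (-t^2/(2*v)) := by
    apply mul_pos _ (exp_pos _)
    apply div_pos (by nlinarith) (by positivity)
  linarith

/-- Ratio of Gaussian-type tail integrals. -/
lemma gauss_tail_ratio {v : ℝ} (hv : 0 < v) {u w : ℝ → ℝ} {c : ℝ}
    (hu : Tendsto u atTop atBot) (hw : Tendsto w atTop atBot)
    (hr : Tendsto (fun y => w y / u y) atTop (nhds 1))
    (hs : Tendsto (fun y => (w y)^2 - (u y)^2) atTop (nhds c)) :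
    Tendsto (fun y => (∫ x in Iic (w y), rexp (-x^2/(2*v))) /
        (∫ x in Iic (u y), rexp (-x^2/(2*v)))) atTop (nhds (rexp (-c/(2*v)))) := by
  -- auxiliary limits
  have huneg : ∀ᶠ y in atTop, u y < 0 := hu.eventually (eventually_lt_atBot 0)
  have hwneg : ∀ᶠ y in atTop, w y < 0 := hw.eventually (eventually_lt_atBot 0)
  have hu2 : Tendsto (fun y => (u y)^2) atTop atTop := by
    have := hu.atBot_mul_atBot₀ hu
    refine this.congr (fun y => by ring)
  have hw2 : Tendsto (fun y => (w y)^2) atTop atTop := by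
    have := hw.atBot_mul_atBot₀ hw
    refine this.congr (fun y => by ring)
  have huw : Tendsto (fun y => u y / w y) atTop (nhds 1) := by
    have h := (hr.inv₀ one_ne_zero)
    simp only [inv_one] at h
    apply h.congr'
    filter_upwards [huneg, hwneg] with y hy hz
    rw [inv_div]
  have hexp : Tendsto (fun y => rexp (-((w y)^2 - (u y)^2)/(2*v))) atTop (nhds (rexp (-c/(2*v)))) := by
    apply (Real.continuous_exp.tendsto _).comp
    have : Tendsto (fun y => -((w y)^2 - (u y)^2)) atTop (nhds (-c)) := hs.neg
    exact this.div_const (2*v)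
  -- upper bound function
  have hub : Tendsto (fun y => (u y / w y) * (1 + v/(u y)^2) * rexp (-((w y)^2 - (u y)^2)/(2*v)))
      atTop (nhds (rexp (-c/(2*v)))) := by
    have h1 : Tendsto (fun y => 1 + v/(u y)^2) atTop (nhds 1) := by
      have := Tendsto.div_atTop (tendsto_const_nhds (x := v)) hu2
      simpa using (tendsto_const_nhds (x := (1:ℝ))).add this
    have := (huw.mul h1).mul hexp
    simpa using this
  -- lower bound function
  have hlb : Tendsto (fun y => (u y / w y) * (1 + v/(w y)^2)⁻¹ * rexp (-((w y)^2 - (u y)^2)/(2*v)))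
      atTop (nhds (rexp (-c/(2*v)))) := by
    have h1 : Tendsto (fun y => (1 + v/(w y)^2)⁻¹) atTop (nhds 1) := by
      have h2 : Tendsto (fun y => 1 + v/(w y)^2) atTop (nhds 1) := by
        have := Tendsto.div_atTop (tendsto_const_nhds (x := v)) hw2
        simpa using (tendsto_const_nhds (x := (1:ℝ))).add this
      simpa using h2.inv₀ one_ne_zero
    have := (huw.mul h1).mul hexp
    simpa using this
  apply tendsto_of_tendsto_of_tendsto_of_le_of_le' hlb hub
  · -- lower bound
    filter_upwards [huneg, hwneg] with y hy hz
    have hIu_pos : 0 < ∫ x in Iic (u y), rexp (-x^2/(2*v)) := integral_gexp_pos hv hy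
    have hIw_pos : 0 < ∫ x in Iic (w y), rexp (-x^2/(2*v)) := integral_gexp_pos hv hz
    have hIw_low : (v * (-(w y)) / ((w y)^2 + v)) * rexp (-(w y)^2/(2*v)) ≤
        ∫ x in Iic (w y), rexp (-x^2/(2*v)) := mill_lower hv hz
    have hIu_up : (∫ x in Iic (u y), rexp (-x^2/(2*v))) ≤
        (v / (-(u y))) * rexp (-(u y)^2/(2*v)) := mill_upper hv hy
    have hEdiv : rexp (-(w y)^2/(2*v)) / rexp (-(u y)^2/(2*v)) =
        rexp (-((w y)^2 - (u y)^2)/(2*v)) := by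
      rw [← Real.exp_sub]; congr 1; ring
    have key : (u y / w y) * (1 + v/(w y)^2)⁻¹ * rexp (-((w y)^2 - (u y)^2)/(2*v)) =
        ((v * (-(w y)) / ((w y)^2 + v)) * rexp (-(w y)^2/(2*v))) /
        ((v / (-(u y))) * rexp (-(u y)^2/(2*v))) := by
      rw [mul_div_mul_comm, hEdiv]
      congr 1
      have hw0 : w y ≠ 0 := hz.ne
      have hu0 : u y ≠ 0 := hy.ne
      have h1 : (w y)^2 + v ≠ 0 := by positivity
      have h2 : (1 + v/(w y)^2) ≠ 0 := by positivity
      field_simp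
    rw [key]
    have hBup_pos : (0:ℝ) < (v / (-(u y))) * rexp (-(u y)^2/(2*v)) := by
      apply mul_pos (div_pos hv (by linarith)) (exp_pos _)
    exact div_le_div₀ hIw_pos.le hIw_low hIu_pos hIu_up
  · -- upper bound
    filter_upwards [huneg, hwneg] with y hy hz
    have hIu_pos : 0 < ∫ x in Iic (u y), rexp (-x^2/(2*v)) := integral_gexp_pos hv hy
    have hIw_up : (∫ x in Iic (w y), rexp (-x^2/(2*v))) ≤
        (v / (-(w y))) * rexp (-(w y)^2/(2*v)) := mill_upper hv hz
    have hIu_low : (v * (-(u y)) / ((u y)^2 + v)) * rexp (-(u y)^2/(2*v)) ≤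
        ∫ x in Iic (u y), rexp (-x^2/(2*v)) := mill_lower hv hy
    have hIu_low_pos : (0:ℝ) < (v * (-(u y)) / ((u y)^2 + v)) * rexp (-(u y)^2/(2*v)) := by
      apply mul_pos _ (exp_pos _)
      apply div_pos (by nlinarith) (by positivity)
    have hEdiv : rexp (-(w y)^2/(2*v)) / rexp (-(u y)^2/(2*v)) =
        rexp (-((w y)^2 - (u y)^2)/(2*v)) := by
      rw [← Real.exp_sub]; congr 1; ring
    have key : (u y / w y) * (1 + v/(u y)^2) * rexp (-((w y)^2 - (u y)^2)/(2*v)) =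
        ((v / (-(w y))) * rexp (-(w y)^2/(2*v))) /
        ((v * (-(u y)) / ((u y)^2 + v)) * rexp (-(u y)^2/(2*v))) := by
      rw [mul_div_mul_comm, hEdiv]
      congr 1
      have hw0 : w y ≠ 0 := hz.ne
      have hu0 : u y ≠ 0 := hy.ne
      have h1 : (u y)^2 + v ≠ 0 := by positivity
      field_simp
    rw [key]
    have hup_nonneg : (0:ℝ) ≤ (v / (-(w y))) * rexp (-(w y)^2/(2*v)) := by
      apply mul_nonneg (div_nonneg hv.le (by linarith)) (exp_pos _).le
    exact div_le_div₀ hup_nonneg hIw_up hIu_low_pos hIu_low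

lemma exists_mvt (q : ℝ → ℝ) (hq : Differentiable ℝ q) (a c : ℝ) :
    ∃ ξ ∈ Icc (min a c) (max a c), q c - q a = deriv q ξ * (c - a) := by
  rcases lt_trichotomy a c with hac | hac | hac
  · obtain ⟨ξ, hξ, hd⟩ := exists_deriv_eq_slope q hac hq.continuous.continuousOn
      (hq.differentiableOn)
    refine ⟨ξ, ?_, ?_⟩
    · rw [min_eq_left hac.le, max_eq_right hac.le]
      exact Ioo_subset_Icc_self hξ
    · rw [hd, div_mul_eq_mul_div, mul_div_assoc, div_self (sub_ne_zero.2 hac.ne'), mul_one]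
  · subst hac
    exact ⟨a, by simp, by simp⟩
  · obtain ⟨ξ, hξ, hd⟩ := exists_deriv_eq_slope q hac hq.continuous.continuousOn
      (hq.differentiableOn)
    refine ⟨ξ, ?_, ?_⟩
    · rw [min_eq_right hac.le, max_eq_left hac.le]
      exact Ioo_subset_Icc_self hξ
    · rw [hd]
      have : a - c ≠ 0 := sub_ne_zero.2 hac.ne'
      field_simp
      ring

lemma tendsto_div_sq_of_deriv {f : ℝ → ℝ} (hf : Differentiable ℝ f)
    (hf' : Tendsto (fun x => deriv f x / x) atBot (nhds 0)) :
    Tendsto (fun x => f x / x^2) atBot (nhds 0) := by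
  rw [NormedAddCommGroup.tendsto_nhds_zero]
  intro ε hε
  rw [NormedAddCommGroup.tendsto_nhds_zero] at hf'
  obtain ⟨X₀, hX₀⟩ := eventually_atBot.mp (hf' (ε/4) (by positivity))
  set X := min X₀ (-1) with hX
  have hXneg : X < 0 := lt_of_le_of_lt (min_le_right _ _) (by norm_num)
  have hbound : ∀ x ≤ X, |f x| ≤ |f X| + ε/4 * x^2 := by
    intro x hx
    have hkey : ‖f X - f x‖ ≤ (ε/4 * (-x)) * ‖X - x‖ := by
      apply Convex.norm_image_sub_le_of_norm_hasDerivWithin_le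
        (f' := deriv f) (s := Icc x X)
        (fun t ht => (hf t).hasDerivAt.hasDerivWithinAt) _ (convex_Icc x X)
        (left_mem_Icc.2 hx) (right_mem_Icc.2 hx)
      intro t ht
      have ht1 : t ≤ X := ht.2
      have ht0 : t < 0 := lt_of_le_of_lt ht1 hXneg
      have htX₀ : t ≤ X₀ := le_trans ht1 (min_le_left _ _)
      have h1 : ‖deriv f t / t‖ < ε/4 := hX₀ t htX₀
      have h2 : |deriv f t| = |deriv f t / t| * |t| := by
        rw [← abs_mul, div_mul_cancel₀ _ ht0.ne]
      rw [Real.norm_eq_abs] at h1 ⊢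
      rw [h2]
      have h3 : |t| ≤ -x := by
        rw [abs_of_neg ht0]
        linarith [ht.1]
      calc |deriv f t / t| * |t| ≤ (ε/4) * |t| := by
            apply mul_le_mul_of_nonneg_right h1.le (abs_nonneg _)
        _ ≤ (ε/4) * (-x) := by
            apply mul_le_mul_of_nonneg_left h3 (by positivity)
    have hXx : ‖X - x‖ ≤ -x := by
      rw [Real.norm_eq_abs, abs_of_nonneg (by linarith)]
      linarith
    have : ‖f X - f x‖ ≤ (ε/4 * (-x)) * (-x) := by
      calc ‖f X - f x‖ ≤ (ε/4 * (-x)) * ‖X - x‖ := hkey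
        _ ≤ (ε/4 * (-x)) * (-x) := by
            apply mul_le_mul_of_nonneg_left hXx
            have : (0:ℝ) ≤ -x := by linarith [lt_of_le_of_lt hx hXneg]
            positivity
    rw [Real.norm_eq_abs] at this
    have h4 : |f x| ≤ |f X| + |f X - f x| := by
      have := abs_sub_abs_le_abs_sub (f x) (f X)
      rw [abs_sub_comm] at this
      linarith [abs_sub_abs_le_abs_sub (f x) (f X), abs_sub_comm (f x) (f X) ▸ this]
    nlinarith [this, h4]
  have hx2top : Tendsto (fun x : ℝ => x^2) atBot atTop := by
    have := (tendsto_id (α := ℝ)).atBot_mul_atBot₀ tendsto_id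
    apply this.congr (fun y => by simp only [id_eq]; ring)
  have h5 : ∀ᶠ x in atBot, |f X| / x^2 < ε/2 :=
    (Tendsto.div_atTop (tendsto_const_nhds (x := |f X|)) hx2top).eventually
      (eventually_abs_sub_lt 0 (by positivity : (0:ℝ) < ε/2)) |>.mono
      (fun x hx => by rw [sub_zero] at hx; exact lt_of_abs_lt hx)
  filter_upwards [eventually_le_atBot X, h5, eventually_lt_atBot (0:ℝ)] with x h1 h2 h3
  have hx2 : (0:ℝ) < x^2 := by nlinarith
  rw [Real.norm_eq_abs, abs_div, abs_of_pos hx2]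
  calc |f x| / x^2 ≤ (|f X| + ε/4 * x^2) / x^2 :=
        by gcongr; exact hbound x h1
    _ = |f X| / x^2 + ε/4 := by rw [add_div, mul_div_assoc, div_self hx2.ne', mul_one]
    _ < ε/2 + ε/4 := by linarith
    _ < ε := by linarith

-- main theorem part (to be appended after aux lemmas)
section Main

open MeasureTheory ProbabilityTheory Filter Real Set

theorem transformed_gaussian_left_tail_regularly_varying
    {Ω : Type*} [MeasurableSpace Ω] (μ : Measure Ω) [IsProbabilityMeasure μ]
    (σ : ℝ) (hσ : 0 < σ)
    (Z : Ω → ℝ) (hZmeas : Measurable Z)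
    (hZlaw : μ.map Z = gaussianReal 0 ⟨σ ^ 2, sq_nonneg σ⟩)
    (h : ℝ → ℝ) (hmono : StrictMono h) (hcont : Continuous h)
    (b : ℝ) (hb : 0 < b)
    (f r : ℝ → ℝ)
    (hf : Differentiable ℝ f)
    (hf' : Tendsto (fun x => deriv f x / x) atBot (nhds 0))
    (hr : Tendsto r atBot (nhds 0))
    (hrep : ∀ᶠ x in atBot, h x = -Real.exp (b * x ^ 2 + f x + r x)) :
    ∀ l : ℝ, 0 < l →
      Tendsto
        (fun y => (μ {ω | h (Z ω) ≤ -(l * y)}).toReal / (μ {ω | h (Z ω) ≤ -y}).toReal)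
        atTop (nhds (l ^ (-(1 / (2 * b * σ ^ 2))))) := by
  intro l hl
  classical
  have hv : (0:ℝ) < σ^2 := by positivity
  have hV : ((⟨σ ^ 2, sq_nonneg σ⟩ : NNReal)) ≠ 0 := by
    intro hc
    have := congrArg NNReal.toReal hc
    change σ ^ 2 = 0 at this
    exact hv.ne' this
  -- the function q = b x² + f x
  set q : ℝ → ℝ := fun x => b * x^2 + f x with hqdef
  have hq : Differentiable ℝ q := ((differentiable_pow 2).const_mul b).add hf
  have hq' : ∀ x, deriv q x = 2*b*x + deriv f x := by
    intro x
    have h1 : HasDerivAt (fun y : ℝ => b*y^2) (2*b*x) x := by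
      have := (hasDerivAt_pow 2 x).const_mul b
      refine this.congr_deriv ?_
      simp
      ring
    exact (h1.add (hf x).hasDerivAt).deriv
  -- f is o(x²) at -∞
  have hfo : Tendsto (fun x => f x / x^2) atBot (nhds 0) := tendsto_div_sq_of_deriv hf hf'
  -- the exponent tends to ∞ at -∞
  have hx2top : Tendsto (fun x : ℝ => x^2) atBot atTop := by
    have := (tendsto_id (α := ℝ)).atBot_mul_atBot₀ tendsto_id
    exact this.congr (fun y => by simp only [id_eq]; ring)
  have hEtop : Tendsto (fun x => b*x^2 + f x + r x) atBot atTop := by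
    apply tendsto_atTop_mono' atBot
        (f₁ := fun x => b/2 * x^2 + (-1))
    · filter_upwards [hfo.eventually (eventually_abs_sub_lt 0 (half_pos hb)),
        hr.eventually (eventually_abs_sub_lt 0 one_pos),
        eventually_lt_atBot (0:ℝ)] with x h1 h2 h3
      rw [sub_zero] at h1 h2
      have hx2 : (0:ℝ) < x^2 := by nlinarith
      have hf1 : |f x| < b/2 * x^2 := by
        have := (abs_div (f x) (x^2)) ▸ h1
        rw [abs_div, abs_of_pos hx2, div_lt_iff₀ hx2] at h1
        linarith [h1]
      have := abs_lt.mp hf1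
      have := abs_lt.mp h2
      nlinarith
    · have h1 : Tendsto (fun x : ℝ => b/2 * x^2) atBot atTop :=
        hx2top.const_mul_atTop (half_pos hb)
      exact tendsto_atTop_add_const_right _ _ h1
  -- h tends to -∞ at -∞
  have hhbot : Tendsto h atBot atBot := by
    have h1 : Tendsto (fun x => -rexp (b*x^2 + f x + r x)) atBot atBot :=
      tendsto_neg_atTop_atBot.comp (Real.tendsto_exp_atTop.comp hEtop)
    exact Filter.Tendsto.congr' (by filter_upwards [hrep] with x hx; rw [hx]) h1
  -- solving h x = -y
  have hex : ∀ᶠ y in atTop, ∃ x, h x = -y := by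
    filter_upwards [eventually_gt_atTop (-(h 0))] with y hy
    have h0 : -y < h 0 := by linarith
    obtain ⟨x₀, hx₀⟩ := (hhbot.eventually (eventually_le_atBot (-y))).exists
    have hx₀0 : x₀ ≤ 0 := by
      by_contra hc
      push_neg at hc
      have := hmono hc
      linarith
    obtain ⟨x, _, hx⟩ := intermediate_value_Icc hx₀0 hcont.continuousOn ⟨hx₀, h0.le⟩
    exact ⟨x, hx⟩
  set g : ℝ → ℝ := fun y => if hy : ∃ x, h x = -y then hy.choose else 0 with hgdef
  have hgspec : ∀ᶠ y in atTop, h (g y) = -y := by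
    filter_upwards [hex] with y hy
    simp only [hgdef]
    rw [dif_pos hy]
    exact hy.choose_spec
  have hgbot : Tendsto g atTop atBot := by
    rw [tendsto_atBot]
    intro M
    filter_upwards [hgspec, eventually_gt_atTop (-(h M))] with y h1 h2
    have : h (g y) < h M := by rw [h1]; linarith
    exact (hmono.lt_iff_lt.mp this).le
  have hlmul : Tendsto (fun y : ℝ => l*y) atTop atTop :=
    Tendsto.const_mul_atTop hl tendsto_id
  set u : ℝ → ℝ := g with hudef
  set w : ℝ → ℝ := fun y => g (l*y) with hwdef
  have huspec : ∀ᶠ y in atTop, h (u y) = -y := hgspec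
  have hwspec : ∀ᶠ y in atTop, h (w y) = -(l*y) := hlmul.eventually hgspec
  have hubot : Tendsto u atTop atBot := hgbot
  have hwbot : Tendsto w atTop atBot := hgbot.comp hlmul
  -- log equations
  have hulog : ∀ᶠ y in atTop, b*(u y)^2 + f (u y) + r (u y) = Real.log y := by
    filter_upwards [huspec, hubot.eventually hrep, eventually_gt_atTop (0:ℝ)] with y h1 h2 h3
    have he : rexp (b*(u y)^2 + f (u y) + r (u y)) = y := by
      have := h2.symm.trans h1
      have := neg_inj.mp this
      linarith [this]
    have h4 := Real.log_exp (b*(u y)^2 + f (u y) + r (u y))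
    rw [he] at h4
    exact h4.symm
  have hwlog : ∀ᶠ y in atTop, b*(w y)^2 + f (w y) + r (w y) = Real.log l + Real.log y := by
    filter_upwards [hwspec, hwbot.eventually hrep, eventually_gt_atTop (0:ℝ)] with y h1 h2 h3
    have he : rexp (b*(w y)^2 + f (w y) + r (w y)) = l*y := by
      have := h2.symm.trans h1
      have := neg_inj.mp this
      linarith [this]
    have h4 := Real.log_exp (b*(w y)^2 + f (w y) + r (w y))
    rw [he, Real.log_mul hl.ne' h3.ne'] at h4
    exact h4.symm
  -- mean value theorem choices
  choose ξ hξmem hξeq using fun y => exists_mvt q hq (u y) (w y)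
  choose η hηmem hηeq using fun y => exists_mvt f hf (u y) (w y)
  have hmaxbot : Tendsto (fun y => max (u y) (w y)) atTop atBot := by
    rw [tendsto_atBot]
    intro M
    filter_upwards [hubot.eventually (eventually_le_atBot M),
      hwbot.eventually (eventually_le_atBot M)] with y h1 h2
    exact max_le h1 h2
  have hξbot : Tendsto ξ atTop atBot :=
    tendsto_atBot_mono (fun y => (hξmem y).2) hmaxbot
  have hηbot : Tendsto η atTop atBot :=
    tendsto_atBot_mono (fun y => (hηmem y).2) hmaxbot
  -- the "c" function
  set c : ℝ → ℝ := fun y => Real.log l + r (u y) - r (w y) with hcdef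
  have hrc : Tendsto c atTop (nhds (Real.log l)) := by
    have h1 : Tendsto (fun y => r (u y)) atTop (nhds 0) := hr.comp hubot
    have h2 : Tendsto (fun y => r (w y)) atTop (nhds 0) := hr.comp hwbot
    have h3 := ((tendsto_const_nhds (x := Real.log l)).add h1).sub h2
    rw [add_zero, sub_zero] at h3
    exact h3
  have heq1 : ∀ᶠ y in atTop, deriv q (ξ y) * (w y - u y) = c y := by
    filter_upwards [hulog, hwlog] with y h1 h2
    rw [← hξeq y]
    simp only [hqdef, hcdef]
    linarith
  -- the φ function
  set φ : ℝ → ℝ := fun y => 2*b + deriv f (ξ y) / (ξ y) with hφdef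
  have hφ : Tendsto φ atTop (nhds (2*b)) := by
    have h1 : Tendsto (fun y => deriv f (ξ y) / (ξ y)) atTop (nhds 0) := hf'.comp hξbot
    have := (tendsto_const_nhds (x := 2*b)).add h1
    simpa using this
  have hφb : ∀ᶠ y in atTop, b < φ y := hφ.eventually (eventually_gt_nhds (by linarith))
  have hξneg : ∀ᶠ y in atTop, ξ y ≤ -1 := hξbot.eventually (eventually_le_atBot (-1))
  have hηneg : ∀ᶠ y in atTop, η y ≤ -1 := hηbot.eventually (eventually_le_atBot (-1))
  have huneg : ∀ᶠ y in atTop, u y ≤ -1 := hubot.eventually (eventually_le_atBot (-1))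
  have hwu : ∀ᶠ y in atTop, w y - u y = c y / (ξ y * φ y) := by
    filter_upwards [heq1, hξneg, hφb] with y h1 h2 h3
    have hξ0 : ξ y ≠ 0 := by intro hc; rw [hc] at h2; linarith
    have hden : ξ y * φ y ≠ 0 := by
      apply ne_of_lt
      apply mul_neg_of_neg_of_pos (by linarith) (by linarith)
    have hqd : deriv q (ξ y) = ξ y * φ y := by
      rw [hq', hφdef]
      field_simp
    rw [eq_div_iff hden, ← h1, hqd]
    ring
  have hdenbot : Tendsto (fun y => ξ y * φ y) atTop atBot :=
    Filter.Tendsto.atBot_mul_pos (by linarith : (0:ℝ) < 2*b) hξbot hφ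
  have hinv : Tendsto (fun y => (ξ y * φ y)⁻¹) atTop (nhds 0) := by
    have h1 : Tendsto (fun y => -(ξ y * φ y)) atTop atTop :=
      tendsto_neg_atBot_atTop.comp hdenbot
    have h2 := h1.inv_tendsto_atTop
    have h3 : Tendsto (fun y => -(-(ξ y * φ y))⁻¹) atTop (nhds (-0)) := Filter.Tendsto.neg h2
    simp only [neg_inv, neg_neg, neg_zero] at h3
    exact h3
  have hwu0 : Tendsto (fun y => w y - u y) atTop (nhds 0) := by
    have h1 : Tendsto (fun y => c y / (ξ y * φ y)) atTop (nhds 0) := by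
      have := hrc.mul hinv
      simpa [div_eq_mul_inv] using this
    exact Filter.Tendsto.congr' (by filter_upwards [hwu] with y hy; rw [← hy]) h1
  -- η/ξ → 1
  have hd2 : Tendsto (fun y => (η y - ξ y) / ξ y) atTop (nhds 0) := by
    apply squeeze_zero_norm' (a := fun y => |w y - u y|)
    · filter_upwards [hξneg] with y h1
      have hmem1 := hξmem y
      have hmem2 := hηmem y
      have habs : |η y - ξ y| ≤ |w y - u y| := by
        rw [abs_sub_le_iff]
        have hmm : max (u y) (w y) - min (u y) (w y) = |w y - u y| := by
          rw [max_sub_min_eq_abs, abs_sub_comm]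
        constructor <;>
          [skip; skip] <;>
          · have := hmem1.1; have := hmem1.2; have := hmem2.1; have := hmem2.2
            rw [← hmm]; linarith
      have hξ1 : (1:ℝ) ≤ |ξ y| := by
        rw [abs_of_nonpos (by linarith)]
        linarith
      rw [Real.norm_eq_abs, abs_div]
      calc |η y - ξ y| / |ξ y| ≤ |η y - ξ y| / 1 := by gcongr
        _ = |η y - ξ y| := div_one _
        _ ≤ |w y - u y| := habs
    · have := hwu0.abs
      simpa using this
  have hηξ : Tendsto (fun y => η y / ξ y) atTop (nhds 1) := by
    have h1 := (tendsto_const_nhds (x := (1:ℝ))).add hd2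
    apply Filter.Tendsto.congr' _ (by simpa using h1)
    filter_upwards [hξneg] with y hy
    have hξ0 : ξ y ≠ 0 := by intro hc; rw [hc] at hy; linarith
    field_simp
    ring
  have hfη : Tendsto (fun y => deriv f (η y) / (η y)) atTop (nhds 0) := hf'.comp hηbot
  have hcφ : Tendsto (fun y => c y / φ y) atTop (nhds (Real.log l / (2*b))) :=
    hrc.div hφ (by linarith)
  have hterm : Tendsto (fun y => deriv f (η y) * (w y - u y)) atTop (nhds 0) := by
    have h3 : Tendsto (fun y => (deriv f (η y) / η y) * (η y / ξ y) * (c y / φ y)) atTop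
        (nhds 0) := by
      have := (hfη.mul hηξ).mul hcφ
      simpa using this
    apply Filter.Tendsto.congr' _ h3
    filter_upwards [hwu, hξneg, hηneg, hφb] with y h1 h2 h3 h4
    have hξ0 : ξ y ≠ 0 := by intro hc; rw [hc] at h2; linarith
    have hη0 : η y ≠ 0 := by intro hc; rw [hc] at h3; linarith
    have hφ0 : φ y ≠ 0 := by linarith
    rw [h1]
    field_simp
  -- the squared difference limit
  have hsq : Tendsto (fun y => (w y)^2 - (u y)^2) atTop (nhds (Real.log l / b)) := by
    have h1 : Tendsto (fun y => (c y - deriv f (η y) * (w y - u y)) / b) atTop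
        (nhds (Real.log l / b)) := by
      have := (hrc.sub hterm).div_const b
      simpa using this
    apply Filter.Tendsto.congr' _ h1
    filter_upwards [hulog, hwlog] with y h1 h2
    rw [eq_comm, eq_div_iff hb.ne']
    have hfd := hηeq y
    have expand : ((w y)^2 - (u y)^2) * b = b*(w y)^2 - b*(u y)^2 := by ring
    rw [expand]
    simp only [hcdef]
    linarith
  -- w/u → 1
  have hrat : Tendsto (fun y => w y / u y) atTop (nhds 1) := by
    have h1 : Tendsto (fun y => (w y - u y) / u y) atTop (nhds 0) := by
      apply squeeze_zero_norm' (a := fun y => |w y - u y|)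
      · filter_upwards [huneg] with y hy
        have hu1 : (1:ℝ) ≤ |u y| := by
          rw [abs_of_nonpos (by linarith)]
          linarith
        rw [Real.norm_eq_abs, abs_div]
        calc |w y - u y| / |u y| ≤ |w y - u y| / 1 := by gcongr
          _ = |w y - u y| := div_one _
      · simpa using hwu0.abs
    have h2 := (tendsto_const_nhds (x := (1:ℝ))).add h1
    apply Filter.Tendsto.congr' _ (by simpa using h2)
    filter_upwards [huneg] with y hy
    have hu0 : u y ≠ 0 := by intro hc; rw [hc] at hy; linarith
    field_simp
    ring
  -- combine with the gaussian tail ratio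
  have hgr := gauss_tail_ratio hv hubot hwbot hrat hsq
  have hlimeq : rexp (-(Real.log l / b)/(2*σ^2)) = l ^ (-(1/(2*b*σ^2))) := by
    rw [Real.rpow_def_of_pos hl]
    congr 1
    rw [neg_div, div_div, mul_neg, mul_one_div]
    congr 2
    ring
  rw [← hlimeq]
  apply Filter.Tendsto.congr' _ hgr
  filter_upwards [huspec, hwspec] with y h1 h2
  have hc0 : ((√(2*π*σ^2))⁻¹ : ℝ) ≠ 0 := by
    have : (0:ℝ) < √(2*π*σ^2) := Real.sqrt_pos.mpr (by positivity)
    positivity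
  have hpdf : (fun x => gaussianPDFReal 0 (⟨σ^2, sq_nonneg σ⟩ : NNReal) x)
      = fun x => (√(2*π*σ^2))⁻¹ * rexp (-x^2/(2*σ^2)) := by
    funext x
    simp only [gaussianPDFReal, NNReal.coe_mk, sub_zero]
    rfl
  have hmeas : ∀ t : ℝ, (μ {ω | Z ω ≤ t}).toReal
      = (√(2*π*σ^2))⁻¹ * ∫ x in Iic t, rexp (-x^2/(2*σ^2)) := by
    intro t
    have hseteq : {ω | Z ω ≤ t} = Z ⁻¹' (Iic t) := rfl
    rw [hseteq, ← Measure.map_apply hZmeas measurableSet_Iic, hZlaw,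
      gaussianReal_apply_eq_integral 0 hV,
      ENNReal.toReal_ofReal (setIntegral_nonneg measurableSet_Iic
        (fun x _ => gaussianPDFReal_nonneg 0 (⟨σ ^ 2, sq_nonneg σ⟩ : NNReal) x))]
    simp only [hpdf]
    rw [integral_const_mul]
  have hset1 : {ω | h (Z ω) ≤ -(l*y)} = {ω | Z ω ≤ w y} := by
    ext ω
    simp only [mem_setOf_eq]
    rw [← h2]
    exact ⟨fun hh => hmono.le_iff_le.mp hh, fun hh => hmono.le_iff_le.mpr hh⟩
  have hset2 : {ω | h (Z ω) ≤ -y} = {ω | Z ω ≤ u y} := by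
    ext ω
    simp only [mem_setOf_eq]
    rw [← h1]
    exact ⟨fun hh => hmono.le_iff_le.mp hh, fun hh => hmono.le_iff_le.mpr hh⟩
  rw [hset1, hset2, hmeas (w y), hmeas (u y), mul_div_mul_left _ _ hc0]

end Main
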